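/- (Lopsided Lovász local lemma, Erdős–Spencer form) Let H_1, …, H_n be events in a probability space. Suppose there exist a directed graph G on vertex set {1,…,n} and constants r_1,…,r_n ∈ [0,1) such that for every i and every Y ⊆ {1,…,n} \ N̄(i), we have P(H_i | ⋂_{j∈Y} H_j^c) ≤ r_i ∏_{j ∈ N̄(i)} (1 − r_j) whenever the conditioning event has positive probability. Then P(⋂_{i=1}^n H_i^c) ≥ ∏_{i=1}^n (1 − r_i) > 0. -/

import Mathlib

open Finset MeasureTheory

/-- The closed out-neighborhood `N̄(i) = {i} ∪ {j : (i,j) ∈ E}` of `i` in the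
directed graph with edge relation `E` on `Fin n`. -/
def closedNbhd {n : ℕ} (E : Fin n → Fin n → Prop) [DecidableRel E] (i : Fin n) :
    Finset (Fin n) :=
  insert i (Finset.univ.filter (E i))

/-- Lopsided Lovász local lemma (Erdős–Spencer form): if for each `i` and each
`Y ⊆ [n] \ N̄(i)` with `P(⋂_{j∈Y} H_jᶜ) > 0` we have
`P(H_i | ⋂_{j∈Y} H_jᶜ) ≤ r_i ∏_{j∈N̄(i)} (1 − r_j)`, then
`P(⋂ᵢ H_iᶜ) ≥ ∏ᵢ (1 − r_i) > 0`. -/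
theorem lopsided_lovasz_local_lemma {Ω : Type*} [MeasurableSpace Ω]
    (P : Measure Ω) [IsProbabilityMeasure P] (n : ℕ)
    (H : Fin n → Set Ω) (hH : ∀ i, MeasurableSet (H i))
    (E : Fin n → Fin n → Prop) [DecidableRel E]
    (r : Fin n → ℝ) (hr0 : ∀ i, 0 ≤ r i) (hr1 : ∀ i, r i < 1)
    (hyp : ∀ i : Fin n, ∀ Y : Finset (Fin n), (∀ j ∈ Y, j ∉ closedNbhd E i) →
      0 < P (⋂ j ∈ Y, (H j)ᶜ) →
      P (H i ∩ ⋂ j ∈ Y, (H j)ᶜ) ≤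
        ENNReal.ofReal (r i * ∏ j ∈ closedNbhd E i, (1 - r j)) * P (⋂ j ∈ Y, (H j)ᶜ)) :
    ENNReal.ofReal (∏ i, (1 - r i)) ≤ P (⋂ i, (H i)ᶜ) ∧ 0 < P (⋂ i, (H i)ᶜ) := by
  classical
  set A : Finset (Fin n) → Set Ω := fun S => ⋂ j ∈ S, (H j)ᶜ with hA
  have hmono : ∀ {S T : Finset (Fin n)}, S ⊆ T → A T ⊆ A S := by
    intro S T hST x hx
    simp only [A, Set.mem_iInter] at hx ⊢
    exact fun j hj => hx j (hST hj)
  have hAins : ∀ (a : Fin n) (S : Finset (Fin n)), A (insert a S) = (H a)ᶜ ∩ A S := by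
    intro a S
    simp [A, Set.biInter_insert]
  have hfin : ∀ s : Set Ω, P s ≠ ⊤ := fun s => measure_ne_top P s
  have peel : ∀ (a : Fin n) (S : Finset (Fin n)),
      P (H a ∩ A S) ≤ ENNReal.ofReal (r a) * P (A S) →
      ENNReal.ofReal (1 - r a) * P (A S) ≤ P (A (insert a S)) := by
    intro a S h
    have hsum : P (A S ∩ H a) + P (A S \ H a) = P (A S) := measure_inter_add_diff _ (hH a)
    have hdiff : A S \ H a = (H a)ᶜ ∩ A S := by rw [Set.diff_eq, Set.inter_comm]
    have hone : ENNReal.ofReal (1 - r a) + ENNReal.ofReal (r a) = 1 := by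
      rw [← ENNReal.ofReal_add (by linarith [hr1 a]) (hr0 a)]
      norm_num
    have hPA : ENNReal.ofReal (1 - r a) * P (A S) + ENNReal.ofReal (r a) * P (A S)
        = P (A S) := by
      rw [← add_mul, hone, one_mul]
    have key : ENNReal.ofReal (1 - r a) * P (A S) + P (H a ∩ A S)
        ≤ P (A (insert a S)) + P (H a ∩ A S) := by
      calc ENNReal.ofReal (1 - r a) * P (A S) + P (H a ∩ A S)
          ≤ ENNReal.ofReal (1 - r a) * P (A S) + ENNReal.ofReal (r a) * P (A S) :=
            add_le_add le_rfl h
        _ = P (A S) := hPA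
        _ = P (A S ∩ H a) + P (A S \ H a) := hsum.symm
        _ = P (A (insert a S)) + P (H a ∩ A S) := by
            rw [hdiff, hAins, Set.inter_comm (A S) (H a), add_comm]
    exact (ENNReal.add_le_add_iff_right (hfin _)).mp key
  have main : ∀ N : ℕ, ∀ S : Finset (Fin n), S.card ≤ N → ∀ i : Fin n,
      P (H i ∩ A S) ≤ ENNReal.ofReal (r i) * P (A S) := by
    intro N
    induction N using Nat.strong_induction_on with
    | _ N ih =>
      intro S hSN i
      have ihS : ∀ T : Finset (Fin n), T.card < S.card → ∀ k : Fin n,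
          P (H k ∩ A T) ≤ ENNReal.ofReal (r k) * P (A T) := by
        intro T hT k
        exact ih T.card (lt_of_lt_of_le hT hSN) T le_rfl k
      have chain : ∀ S₁ : Finset (Fin n), ∀ S₂ : Finset (Fin n),
          Disjoint S₁ S₂ → S₁ ∪ S₂ ⊆ S →
          ENNReal.ofReal (∏ j ∈ S₁, (1 - r j)) * P (A S₂) ≤ P (A (S₁ ∪ S₂)) := by
        intro S₁
        induction S₁ using Finset.induction_on with
        | empty => intro S₂ _ _; simp
        | insert a S₁' ha ih' =>
          intro S₂ hdisj hsub
          have ha2 : a ∉ S₂ :=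
            fun h => (Finset.disjoint_left.mp hdisj (Finset.mem_insert_self a S₁')) h
          have hd' : Disjoint S₁' S₂ := hdisj.mono_left (Finset.subset_insert a S₁')
          have hsub' : S₁' ∪ S₂ ⊆ S :=
            (Finset.union_subset_union_left (Finset.subset_insert a S₁')).trans hsub
          have haS : a ∈ S := hsub (by simp)
          have hna : a ∉ S₁' ∪ S₂ := by simp [ha, ha2]
          have hcard : (S₁' ∪ S₂).card < S.card :=
            Finset.card_lt_card ((Finset.ssubset_iff_of_subset hsub').mpr ⟨a, haS, hna⟩)
          have hpeel := peel a (S₁' ∪ S₂) (ihS _ hcard a)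
          have hih := ih' S₂ hd' hsub'
          have hunion : insert a S₁' ∪ S₂ = insert a (S₁' ∪ S₂) := by
            simp [Finset.insert_union]
          rw [hunion, Finset.prod_insert ha]
          calc ENNReal.ofReal ((1 - r a) * ∏ j ∈ S₁', (1 - r j)) * P (A S₂)
              = ENNReal.ofReal (1 - r a) * (ENNReal.ofReal (∏ j ∈ S₁', (1 - r j)) * P (A S₂)) := by
                rw [ENNReal.ofReal_mul (by linarith [hr1 a]), mul_assoc]
            _ ≤ ENNReal.ofReal (1 - r a) * P (A (S₁' ∪ S₂)) := mul_le_mul_right hih _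
            _ ≤ P (A (insert a (S₁' ∪ S₂))) := hpeel
      set S₁ := S.filter (fun j => j ∈ closedNbhd E i) with hS₁
      set S₂ := S.filter (fun j => j ∉ closedNbhd E i) with hS₂
      have hdisj : Disjoint S₁ S₂ := by
        rw [Finset.disjoint_left]
        intro x hx1 hx2
        exact (Finset.mem_filter.mp hx2).2 (Finset.mem_filter.mp hx1).2
      have hUn : S₁ ∪ S₂ = S := Finset.filter_union_filter_not_eq _ S
      have hS₂S : S₂ ⊆ S := Finset.filter_subset _ S
      have hAsub : A S ⊆ A S₂ := hmono hS₂S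
      by_cases h0 : P (A S₂) = 0
      · have : P (H i ∩ A S) ≤ 0 :=
          le_trans (measure_mono (le_trans Set.inter_subset_right hAsub)) (le_of_eq h0)
        exact le_trans this zero_le
      · have hpos : 0 < P (A S₂) := pos_iff_ne_zero.mpr h0
        have h1 := hyp i S₂ (fun j hj => (Finset.mem_filter.mp hj).2) hpos
        have h2 : P (H i ∩ A S) ≤ P (H i ∩ A S₂) :=
          measure_mono (Set.inter_subset_inter_right _ hAsub)
        have h3 : ENNReal.ofReal (∏ j ∈ S₁, (1 - r j)) * P (A S₂) ≤ P (A S) := by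
          have := chain S₁ S₂ hdisj (le_of_eq hUn)
          rwa [hUn] at this
        have hS₁sub : S₁ ⊆ closedNbhd E i := fun j hj => (Finset.mem_filter.mp hj).2
        have hprod : ∏ j ∈ closedNbhd E i, (1 - r j) ≤ ∏ j ∈ S₁, (1 - r j) := by
          rw [← Finset.prod_sdiff hS₁sub]
          have hle1 : ∏ j ∈ closedNbhd E i \ S₁, (1 - r j) ≤ 1 :=
            Finset.prod_le_one (fun j _ => by linarith [hr1 j]) (fun j _ => by linarith [hr0 j])
          have hnn : 0 ≤ ∏ j ∈ S₁, (1 - r j) :=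
            Finset.prod_nonneg (fun j _ => by linarith [hr1 j])
          calc (∏ j ∈ closedNbhd E i \ S₁, (1 - r j)) * ∏ j ∈ S₁, (1 - r j)
              ≤ 1 * ∏ j ∈ S₁, (1 - r j) := mul_le_mul_of_nonneg_right hle1 hnn
            _ = ∏ j ∈ S₁, (1 - r j) := one_mul _
        calc P (H i ∩ A S) ≤ P (H i ∩ A S₂) := h2
          _ ≤ ENNReal.ofReal (r i * ∏ j ∈ closedNbhd E i, (1 - r j)) * P (A S₂) := h1
          _ ≤ ENNReal.ofReal (r i * ∏ j ∈ S₁, (1 - r j)) * P (A S₂) := by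
              exact mul_le_mul_left
                (ENNReal.ofReal_le_ofReal (mul_le_mul_of_nonneg_left hprod (hr0 i))) _
          _ = ENNReal.ofReal (r i) * (ENNReal.ofReal (∏ j ∈ S₁, (1 - r j)) * P (A S₂)) := by
              rw [ENNReal.ofReal_mul (hr0 i), mul_assoc]
          _ ≤ ENNReal.ofReal (r i) * P (A S) := mul_le_mul_right h3 _
  have P2 : ∀ (S : Finset (Fin n)) (i : Fin n),
      P (H i ∩ A S) ≤ ENNReal.ofReal (r i) * P (A S) := fun S i => main S.card S le_rfl i
  have lower : ∀ S : Finset (Fin n), ENNReal.ofReal (∏ j ∈ S, (1 - r j)) ≤ P (A S) := by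
    intro S
    induction S using Finset.induction_on with
    | empty => simp [A]
    | insert a S ha ih =>
      rw [Finset.prod_insert ha, ENNReal.ofReal_mul (by linarith [hr1 a])]
      calc ENNReal.ofReal (1 - r a) * ENNReal.ofReal (∏ j ∈ S, (1 - r j))
          ≤ ENNReal.ofReal (1 - r a) * P (A S) := mul_le_mul_right ih _
        _ ≤ P (A (insert a S)) := peel a S (P2 S a)
  have hEq : (⋂ i, (H i)ᶜ) = A Finset.univ := by
    simp [A]
  have hpos : 0 < ∏ i, (1 - r i) :=
    Finset.prod_pos (fun i _ => by linarith [hr1 i])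
  rw [hEq]
  refine ⟨lower Finset.univ, lt_of_lt_of_le ?_ (lower Finset.univ)⟩
  exact ENNReal.ofReal_pos.mpr hpos
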